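/- arXiv:1101.3627 — 2 statements merged into one kernel-verified Lean document; each statement's English description precedes it below -/
import Mathlib

section
/- Let S ⊆ E^n be nonempty with density ρ(S) ≤ 1/2, and let a = χ^S be its characteristic function. Then nei(S) + 2(cor(S)+1)(1 − ρ(S)) ≤ n. -/
open Finset

/-- Weight of a vector in the Boolean cube: the number of ones. -/
def wt {n : ℕ} (y : Fin n → Bool) : ℕ := (Finset.univ.filter fun i => y i = true).card

/-- The face `E^n_y(z) = {x : [x,y] = [z,y]}`: all `x` agreeing with `z` on the
support of `y`. -/
def face {n : ℕ} (y z : Fin n → Bool) : Finset (Fin n → Bool) :=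
  Finset.univ.filter fun x => ∀ i, y i = true → x i = z i

/-- `χ^S` is correlation-immune of order `k`: all faces obtained by fixing `k`
coordinates (i.e. faces `E^n_y(z)` with `wt y = k`) intersect `S` in the same
cardinality. -/
def CorrImmune {n : ℕ} (S : Finset (Fin n → Bool)) (k : ℕ) : Prop :=
  ∀ y₁ z₁ y₂ z₂ : Fin n → Bool, wt y₁ = k → wt y₂ = k →
    (face y₁ z₁ ∩ S).card = (face y₂ z₂ ∩ S).card

/-- `cor S` : the maximum order of correlation immunity of `χ^S`. -/
noncomputable def cor {n : ℕ} (S : Finset (Fin n → Bool)) : ℕ :=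
  sSup {k | k ≤ n ∧ CorrImmune S k}

/-- Density `ρ(S) = |S| / 2^n`. -/
def rho {n : ℕ} (S : Finset (Fin n → Bool)) : ℚ := (S.card : ℚ) / 2 ^ n

/-- `nei S`: the average number of neighbors in `S` of vertices of `S`,
`(1/|S|) ∑_{x∈S} |B(x) ∩ S| - 1`, where `B x` is the Hamming ball of radius 1. -/
def nei {n : ℕ} (S : Finset (Fin n → Bool)) : ℚ :=
  (∑ x ∈ S, ((S.filter fun y => hammingDist x y ≤ 1).card : ℚ)) / (S.card : ℚ) - 1

/-- Characteristic function of `S`, as a rational-valued function. -/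
def chi {n : ℕ} (S : Finset (Fin n → Bool)) (x : Fin n → Bool) : ℚ := if x ∈ S then 1 else 0

/-- Characteristic function of `S` as a 2-coloring (color 1 = membership in `S`). -/
def chiCol {n : ℕ} (S : Finset (Fin n → Bool)) (x : Fin n → Bool) : Fin 2 :=
  if x ∈ S then 1 else 0

/-- `Col` is a perfect coloring with parameter matrix `A`: every vertex of color `i`
has exactly `A i j` neighbors (at Hamming distance 1) of color `j`. -/
def IsPerfectColoring {n : ℕ} (Col : (Fin n → Bool) → Fin 2) (A : Fin 2 → Fin 2 → ℕ) : Prop :=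
  ∀ x : Fin n → Bool, ∀ j : Fin 2,
    (Finset.univ.filter fun y => hammingDist x y = 1 ∧ Col y = j).card = A (Col x) j

/-- Fourier transform `â(v) = ∑_u a(u) (-1)^{⟨u,v⟩}`. -/
def fourierT {n : ℕ} (a : (Fin n → Bool) → ℚ) (v : Fin n → Bool) : ℚ :=
  ∑ u : Fin n → Bool, a u * (-1) ^ ((Finset.univ.filter fun i => u i = true ∧ v i = true).card)

/-- Coordinatewise XOR. -/
def xorv {n : ℕ} (u v : Fin n → Bool) : Fin n → Bool := fun i => xor (u i) (v i)

/-- Weight distribution `B_i(a) = (1/|S|) |{(u,v) ∈ S×S : wt(u⊕v) = i}|`. -/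
def Bdist {n : ℕ} (S : Finset (Fin n → Bool)) (i : ℕ) : ℚ :=
  (((S ×ˢ S).filter fun p => wt (xorv p.1 p.2) = i).card : ℚ) / (S.card : ℚ)

/-- Kravchuk polynomial `P_k(i) = ∑_{j=0}^k (-1)^j C(i,j) C(n-i,k-j)`. -/
def krav (n k i : ℕ) : ℚ :=
  ∑ j ∈ Finset.range (k + 1),
    (-1 : ℚ) ^ j * (Nat.choose i j : ℚ) * (Nat.choose (n - i) (k - j) : ℚ)

/-- MacWilliams transform `B'_k(a) = (1/|S|) ∑_{i=0}^n B_i(a) P_k(i)`. -/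
def Bmw {n : ℕ} (S : Finset (Fin n → Bool)) (k : ℕ) : ℚ :=
  (∑ i ∈ Finset.range (n + 1), Bdist S i * krav n k i) / (S.card : ℚ)

lemma prod_sum_swap {n : ℕ} (f : Fin n → Bool → ℚ) :
    ∑ v : Fin n → Bool, ∏ i, f i (v i) = ∏ i, (f i false + f i true) := by
  rw [← Fintype.piFinset_univ, ← Finset.prod_univ_sum]
  simp [Fintype.sum_bool, add_comm]

lemma pow_filter {n : ℕ} (a : ℚ) (p : Fin n → Prop) [DecidablePred p] :
    a ^ (univ.filter p).card = ∏ i, (if p i then a else 1) := by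
  rw [Finset.prod_ite, Finset.prod_const, Finset.prod_const_one, mul_one]

lemma mySign_mul {n : ℕ} (u w v : Fin n → Bool) :
    ((-1:ℚ) ^ ((univ.filter fun i => u i = true ∧ v i = true).card)) *
    ((-1:ℚ) ^ ((univ.filter fun i => w i = true ∧ v i = true).card)) =
    (-1:ℚ) ^ ((univ.filter fun i => (xor (u i) (w i)) = true ∧ v i = true).card) := by
  rw [pow_filter, pow_filter, pow_filter, ← Finset.prod_mul_distrib]
  apply Finset.prod_congr rfl
  intro i _
  cases hu : u i <;> cases hw : w i <;> cases hv : v i <;> norm_num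

lemma sum_sign {n : ℕ} (x : Fin n → Bool) :
    ∑ v : Fin n → Bool, (-1:ℚ) ^ ((univ.filter fun i => x i = true ∧ v i = true).card) =
    if x = (fun _ => false) then (2:ℚ)^n else 0 := by
  have key : ∑ v : Fin n → Bool, ∏ i, (if x i = true ∧ v i = true then (-1:ℚ) else 1)
      = ∏ i, ((if x i = true ∧ false = true then (-1:ℚ) else 1) +
              (if x i = true ∧ true = true then (-1:ℚ) else 1)) :=
    prod_sum_swap (fun i b => if x i = true ∧ b = true then (-1:ℚ) else 1)
  simp_rw [pow_filter]
  rw [key]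
  by_cases hx : x = (fun _ => false)
  · subst hx; simp; norm_num
  · simp only [if_neg hx]
    obtain ⟨i, hi⟩ : ∃ i, x i = true := by
      by_contra h
      push_neg at h
      exact hx (funext fun i => by simpa using h i)
    apply Finset.prod_eq_zero (Finset.mem_univ i)
    simp [hi]


lemma deg_split {n : ℕ} (v : Fin n → Bool) :
    (n : ℚ) - 2 * (wt v : ℚ) = ∑ i : Fin n, (1 - 2 * (if v i = true then (1:ℚ) else 0)) := by
  rw [Finset.sum_sub_distrib, Finset.sum_const, card_univ, Fintype.card_fin]
  rw [← Finset.mul_sum]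
  congr 1
  · simp
  · congr 1
    rw [wt, Finset.card_filter]
    push_cast
    rfl

lemma sum_sign_deg {n : ℕ} (x : Fin n → Bool) :
    ∑ v : Fin n → Bool,
      (-1:ℚ) ^ ((univ.filter fun i => x i = true ∧ v i = true).card) * ((n:ℚ) - 2 * (wt v : ℚ)) =
    if wt x = 1 then (2:ℚ)^n else 0 := by
  -- rewrite integrand as sum over coordinates
  have step1 : ∀ v : Fin n → Bool,
      (-1:ℚ) ^ ((univ.filter fun i => x i = true ∧ v i = true).card) * ((n:ℚ) - 2 * (wt v : ℚ))
      = ∑ i : Fin n, ∏ j : Fin n,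
          ((if x j = true ∧ v j = true then (-1:ℚ) else 1) *
           (if j = i then (1 - 2 * (if v j = true then (1:ℚ) else 0)) else 1)) := by
    intro v
    rw [deg_split, Finset.mul_sum]
    apply Finset.sum_congr rfl
    intro i _
    rw [Finset.prod_mul_distrib, ← pow_filter]
    congr 1
    rw [Finset.prod_ite_eq' univ i (fun j => (1 - 2 * (if v j = true then (1:ℚ) else 0)))]
    simp
  simp_rw [step1]
  rw [Finset.sum_comm]
  have step2 : ∀ i : Fin n,
      (∑ v : Fin n → Bool, ∏ j : Fin n,
          ((if x j = true ∧ v j = true then (-1:ℚ) else 1) *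
           (if j = i then (1 - 2 * (if v j = true then (1:ℚ) else 0)) else 1)))
      = ∏ j : Fin n, (if j = i then (if x j = true then (2:ℚ) else 0)
                      else (if x j = true then 0 else 2)) := by
    intro i
    rw [prod_sum_swap (fun j b =>
      ((if x j = true ∧ b = true then (-1:ℚ) else 1) *
       (if j = i then (1 - 2 * (if b = true then (1:ℚ) else 0)) else 1)))]
    apply Finset.prod_congr rfl
    intro j _
    by_cases hj : j = i <;> cases hx : x j <;> simp [hj, hx] <;> norm_num
  simp_rw [step2]
  by_cases hw : wt x = 1
  · rw [if_pos hw]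
    obtain ⟨i₀, hi₀⟩ := Finset.card_eq_one.mp hw
    have hx0 : x i₀ = true := by
      have : i₀ ∈ univ.filter fun i => x i = true := hi₀ ▸ Finset.mem_singleton_self i₀
      simpa using this
    have hxo : ∀ j, j ≠ i₀ → x j = false := by
      intro j hj
      by_contra h
      have hxj : x j = true := by simpa using h
      have : j ∈ ({i₀} : Finset (Fin n)) := hi₀ ▸ (by simp [hxj])
      exact hj (Finset.mem_singleton.mp this)
    rw [Finset.sum_eq_single i₀]
    · rw [show (2:ℚ)^n = ∏ _j : Fin n, (2:ℚ) by simp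
        ]
      apply Finset.prod_congr rfl
      intro j _
      by_cases hj : j = i₀
      · simp [hj, hx0]
      · simp [hj, hxo j hj]
    · intro i _ hi
      apply Finset.prod_eq_zero (Finset.mem_univ i)
      simp [hxo i hi]
    · intro h; exact absurd (Finset.mem_univ i₀) h
  · rw [if_neg hw]
    apply Finset.sum_eq_zero
    intro i _
    cases hx : x i
    · apply Finset.prod_eq_zero (Finset.mem_univ i)
      simp [hx]
    · have h2 : 1 < (univ.filter fun j => x j = true).card := by
        have hmem : i ∈ univ.filter fun j => x j = true := by simp [hx]
        have h1 : 0 < (univ.filter fun j => x j = true).card := Finset.card_pos.mpr ⟨i, hmem⟩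
        have hw' : (univ.filter fun j => x j = true).card ≠ 1 := hw
        omega
      obtain ⟨j, hjmem, hji⟩ := Finset.exists_mem_ne h2 i
      have hxj : x j = true := by simpa using hjmem
      apply Finset.prod_eq_zero (Finset.mem_univ j)
      simp [hji, hxj]


lemma fourierT_chi {n : ℕ} (S : Finset (Fin n → Bool)) (v : Fin n → Bool) :
    fourierT (chi S) v = ∑ u ∈ S, (-1:ℚ) ^ ((univ.filter fun i => u i = true ∧ v i = true).card) := by
  rw [fourierT]
  simp only [chi, ite_mul, one_mul, zero_mul]
  rw [Finset.sum_ite_mem, Finset.univ_inter]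

lemma xorv_eq_false_iff {n : ℕ} (u w : Fin n → Bool) :
    xorv u w = (fun _ => false) ↔ u = w := by
  constructor
  · intro h
    funext i
    have := congrFun h i
    simpa [xorv] using this
  · rintro rfl
    funext i
    simp [xorv]

lemma parseval {n : ℕ} (S : Finset (Fin n → Bool)) :
    ∑ v : Fin n → Bool, (fourierT (chi S) v)^2 = (2:ℚ)^n * S.card := by
  have expand : ∀ v : Fin n → Bool, (fourierT (chi S) v)^2 =
      ∑ u ∈ S, ∑ w ∈ S,
        (-1:ℚ) ^ ((univ.filter fun i => (xorv u w) i = true ∧ v i = true).card) := by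
    intro v
    rw [sq, fourierT_chi, Finset.sum_mul_sum]
    apply Finset.sum_congr rfl; intro u _
    apply Finset.sum_congr rfl; intro w _
    exact mySign_mul u w v
  simp_rw [expand]
  rw [Finset.sum_comm]
  have : ∀ u ∈ S, ∑ v : Fin n → Bool, ∑ w ∈ S,
      (-1:ℚ) ^ ((univ.filter fun i => (xorv u w) i = true ∧ v i = true).card)
      = (2:ℚ)^n := by
    intro u hu
    rw [Finset.sum_comm]
    have inner : ∀ w ∈ S, ∑ v : Fin n → Bool,
        (-1:ℚ) ^ ((univ.filter fun i => (xorv u w) i = true ∧ v i = true).card)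
        = if u = w then (2:ℚ)^n else 0 := by
      intro w _
      rw [sum_sign (xorv u w)]
      simp only [xorv_eq_false_iff]
    rw [Finset.sum_congr rfl inner, Finset.sum_ite_eq S u (fun _ => (2:ℚ)^n), if_pos hu]
  rw [Finset.sum_congr rfl this, Finset.sum_const, nsmul_eq_mul, mul_comm]

lemma weighted_parseval {n : ℕ} (S : Finset (Fin n → Bool)) :
    ∑ v : Fin n → Bool, (fourierT (chi S) v)^2 * ((n:ℚ) - 2 * (wt v : ℚ))
      = (2:ℚ)^n * ((S ×ˢ S).filter fun p => wt (xorv p.1 p.2) = 1).card := by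
  have expand : ∀ v : Fin n → Bool, (fourierT (chi S) v)^2 * ((n:ℚ) - 2 * (wt v : ℚ)) =
      ∑ p ∈ S ×ˢ S,
        (-1:ℚ) ^ ((univ.filter fun i => (xorv p.1 p.2) i = true ∧ v i = true).card)
          * ((n:ℚ) - 2 * (wt v : ℚ)) := by
    intro v
    rw [sq, fourierT_chi, Finset.sum_mul_sum, Finset.sum_product, Finset.sum_mul]
    apply Finset.sum_congr rfl; intro u _
    rw [Finset.sum_mul]
    apply Finset.sum_congr rfl; intro w _
    congr 1
    exact mySign_mul u w v
  simp_rw [expand]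
  rw [Finset.sum_comm]
  have inner : ∀ p ∈ S ×ˢ S, ∑ v : Fin n → Bool,
      (-1:ℚ) ^ ((univ.filter fun i => (xorv p.1 p.2) i = true ∧ v i = true).card)
        * ((n:ℚ) - 2 * (wt v : ℚ))
      = if wt (xorv p.1 p.2) = 1 then (2:ℚ)^n else 0 := by
    intro p _
    exact sum_sign_deg (xorv p.1 p.2)
  rw [Finset.sum_congr rfl inner, Finset.sum_ite, Finset.sum_const, Finset.sum_const]
  simp [mul_comm]

lemma wt_update_true {n : ℕ} (y : Fin n → Bool) (i : Fin n) (h : y i = false) :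
    wt (Function.update y i true) = wt y + 1 := by
  have : (univ.filter fun j => Function.update y i true j = true)
      = insert i (univ.filter fun j => y j = true) := by
    ext j
    by_cases hj : j = i
    · subst hj; simp [Function.update, h]
    · simp [Function.update, hj]
  rw [wt, this, Finset.card_insert_of_notMem (by simp [h]), wt]

lemma face_split {n : ℕ} (y z : Fin n → Bool) (i : Fin n) (h : y i = false) :
    face y z = face (Function.update y i true) (Function.update z i true)
      ∪ face (Function.update y i true) (Function.update z i false) := by
  ext x
  simp only [face, Finset.mem_union, Finset.mem_filter, Finset.mem_univ, true_and]
  constructor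
  · intro hx
    cases hxi : x i
    · right
      intro j hj
      by_cases hji : j = i
      · subst hji; simp [Function.update, hxi]
      · rw [Function.update_of_ne hji] at hj ⊢
        exact hx j hj
    · left
      intro j hj
      by_cases hji : j = i
      · subst hji; simp [Function.update, hxi]
      · rw [Function.update_of_ne hji] at hj ⊢
        exact hx j hj
  · rintro (hx | hx) <;> intro j hj <;>
    · have hji : j ≠ i := fun e => by subst e; rw [h] at hj; exact Bool.noConfusion hj
      have := hx j (by rw [Function.update_of_ne hji]; exact hj)
      rwa [Function.update_of_ne hji] at this

lemma face_split_disj {n : ℕ} (y z : Fin n → Bool) (i : Fin n) :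
    Disjoint (face (Function.update y i true) (Function.update z i true))
      (face (Function.update y i true) (Function.update z i false)) := by
  rw [Finset.disjoint_left]
  intro x hx hx'
  simp only [face, Finset.mem_filter, Finset.mem_univ, true_and] at hx hx'
  have h1 := hx i (by simp [Function.update])
  have h2 := hx' i (by simp [Function.update])
  rw [Function.update_self] at h1 h2
  rw [h1] at h2
  exact Bool.noConfusion h2

lemma stepdown {n : ℕ} (S : Finset (Fin n → Bool)) (k : ℕ) (hk : k + 1 ≤ n)
    (h : CorrImmune S (k+1)) : CorrImmune S k := by
  have key : ∀ y z : Fin n → Bool, wt y = k → ∃ y' z' : Fin n → Bool,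
      wt y' = k + 1 ∧ (face y z ∩ S).card = 2 * (face y' z' ∩ S).card := by
    intro y z hy
    obtain ⟨i, hi⟩ : ∃ i, y i = false := by
      by_contra hc
      push_neg at hc
      have huniv : (univ.filter fun j => y j = true) = univ := by
        ext j
        simp only [Finset.mem_filter, Finset.mem_univ, true_and, iff_true]
        cases hyj : y j
        · exact absurd hyj (hc j)
        · rfl
      rw [wt, huniv, Finset.card_univ, Fintype.card_fin] at hy
      omega
    refine ⟨Function.update y i true, Function.update z i true, by rw [wt_update_true y i hi, hy], ?_⟩
    rw [face_split y z i hi, Finset.union_inter_distrib_right,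
      Finset.card_union_of_disjoint
        (Finset.disjoint_of_subset_left (Finset.inter_subset_left)
          (Finset.disjoint_of_subset_right (Finset.inter_subset_left)
            (face_split_disj y z i)))]
    have hwt : wt (Function.update y i true) = k + 1 := by rw [wt_update_true y i hi, hy]
    have := h (Function.update y i true) (Function.update z i false)
      (Function.update y i true) (Function.update z i true) hwt hwt
    omega
  intro y₁ z₁ y₂ z₂ h₁ h₂
  obtain ⟨a, b, hab, e₁⟩ := key y₁ z₁ h₁
  obtain ⟨c, d, hcd, e₂⟩ := key y₂ z₂ h₂
  rw [e₁, e₂, h a b c d hab hcd]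

lemma corrImmune_mono {n : ℕ} (S : Finset (Fin n → Bool)) :
    ∀ k, k ≤ n → CorrImmune S k → ∀ j, j ≤ k → CorrImmune S j := by
  intro k
  induction k with
  | zero => intro _ h j hj; rw [Nat.le_zero.mp hj]; exact h
  | succ k ih =>
    intro hk h j hj
    rcases Nat.lt_or_ge j (k+1) with hlt | hge
    · exact ih (by omega) (stepdown S k hk h) j (by omega)
    · have : j = k + 1 := le_antisymm hj hge
      rw [this]; exact h

lemma corrImmune_zero {n : ℕ} (S : Finset (Fin n → Bool)) : CorrImmune S 0 := by
  intro y₁ z₁ y₂ z₂ h₁ h₂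
  have hface : ∀ y z : Fin n → Bool, wt y = 0 → face y z = univ := by
    intro y z hy
    have hy' : ∀ i, y i = false := by
      intro i
      by_contra hc
      have hyi : y i = true := by cases hyi : y i; exact absurd hyi hc; rfl
      have : i ∈ univ.filter fun j => y j = true := by simp [hyi]
      rw [wt, Finset.card_eq_zero] at hy
      simp [hy] at this
    ext x
    simp only [face, Finset.mem_filter, Finset.mem_univ, true_and, iff_true]
    intro i hi
    rw [hy' i] at hi
    exact Bool.noConfusion hi
  rw [hface y₁ z₁ h₁, hface y₂ z₂ h₂]


lemma alt_sum_zero {n : ℕ} (v : Fin n → Bool) (hv0 : v ≠ fun _ => false) :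
    ∑ t : Fin n → Bool, (if (∀ i, t i = true → v i = true) then (-1:ℚ)^(wt t) else 0) = 0 := by
  have key : ∀ t : Fin n → Bool,
      (if (∀ i, t i = true → v i = true) then (-1:ℚ)^(wt t) else 0)
      = ∏ i, (fun i b => if b = true ∧ v i = false then (0:ℚ) else if b = true then -1 else 1) i (t i) := by
    intro t
    by_cases hP : ∀ i, t i = true → v i = true
    · rw [if_pos hP, wt, pow_filter]
      apply Finset.prod_congr rfl
      intro i _
      cases ht : t i
      · simp
      · simp [hP i ht]
    · rw [if_neg hP]
      push_neg at hP
      obtain ⟨i, hti, hvi⟩ := hP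
      refine (Finset.prod_eq_zero (Finset.mem_univ i) ?_).symm
      simp only [hti]
      rw [if_pos ⟨trivial, by cases hv : v i; rfl; exact absurd hv hvi⟩]
  simp_rw [key]
  have swap : ∑ t : Fin n → Bool, ∏ i, (if t i = true ∧ v i = false then (0:ℚ) else if t i = true then -1 else 1)
      = ∏ i : Fin n, ((if false = true ∧ v i = false then (0:ℚ) else if false = true then -1 else 1)
        + (if true = true ∧ v i = false then (0:ℚ) else if true = true then -1 else 1)) :=
    prod_sum_swap (fun i b => if b = true ∧ v i = false then (0:ℚ) else if b = true then -1 else 1)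
  rw [swap]
  obtain ⟨i, hi⟩ : ∃ i, v i = true := by
    by_contra h
    push_neg at h
    refine hv0 (funext fun i => ?_)
    cases hv : v i
    · rfl
    · exact absurd hv (h i)
  apply Finset.prod_eq_zero (Finset.mem_univ i)
  simp [hi]

lemma myFourier_zero {n : ℕ} (S : Finset (Fin n → Bool)) (k : ℕ) (h : CorrImmune S k)
    (v : Fin n → Bool) (hv : wt v = k) (hv0 : v ≠ fun _ => false) :
    fourierT (chi S) v = 0 := by
  rw [fourierT_chi]
  have fib := Finset.sum_fiberwise S (fun u i => u i && v i)
    (fun u => (-1:ℚ) ^ ((univ.filter fun i => u i = true ∧ v i = true).card))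
  rw [← fib]
  have inner : ∀ t : Fin n → Bool,
      (∑ u ∈ S.filter (fun u => (fun i => u i && v i) = t),
        (-1:ℚ) ^ ((univ.filter fun i => u i = true ∧ v i = true).card))
      = ((S.filter (fun u => (fun i => u i && v i) = t)).card : ℚ) * (-1:ℚ)^(wt t) := by
    intro t
    have hsign : ∀ u ∈ S.filter (fun u => (fun i => u i && v i) = t),
        (-1:ℚ) ^ ((univ.filter fun i => u i = true ∧ v i = true).card) = (-1:ℚ)^(wt t) := by
      intro u hu
      have ht : ∀ i, t i = (u i && v i) := fun i =>
        (congrFun (Finset.mem_filter.mp hu).2 i).symm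
      congr 1
      simp only [wt]
      apply congrArg Finset.card
      apply Finset.filter_congr
      intro i _
      rw [ht i]
      constructor
      · rintro ⟨h1, h2⟩; rw [h1, h2]; rfl
      · intro hb
        exact ⟨Bool.and_elim_left (by exact hb), Bool.and_elim_right (by exact hb)⟩
    rw [Finset.sum_congr rfl hsign, Finset.sum_const, nsmul_eq_mul]
  rw [Finset.sum_congr rfl (fun t _ => inner t)]
  -- fiber cardinalities
  set M : ℕ := (face v v ∩ S).card with hM
  have hcard : ∀ t : Fin n → Bool,
      (S.filter (fun u => (fun i => u i && v i) = t)).card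
      = if (∀ i, t i = true → v i = true) then M else 0 := by
    intro t
    by_cases hP : ∀ i, t i = true → v i = true
    · rw [if_pos hP]
      have : S.filter (fun u => (fun i => u i && v i) = t) = face v t ∩ S := by
        ext u
        simp only [Finset.mem_filter, Finset.mem_inter, face, Finset.mem_univ, true_and]
        constructor
        · rintro ⟨hu, hm⟩
          refine ⟨fun i hvi => ?_, hu⟩
          rw [← congrFun hm i, hvi, Bool.and_true]
        · rintro ⟨hf, hu⟩
          refine ⟨hu, funext fun i => ?_⟩
          cases hvi : v i
          · rw [Bool.and_false]
            cases ht : t i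
            · rfl
            · exact absurd (hP i ht) (by simp [hvi])
          · rw [Bool.and_true, hf i hvi]
      rw [this]
      exact h v t v v hv hv
    · rw [if_neg hP]
      push_neg at hP
      obtain ⟨i, hti, hvi⟩ := hP
      rw [Finset.card_eq_zero, Finset.filter_eq_empty_iff]
      intro u _
      intro hm
      have := congrFun hm i
      rw [hti] at this
      cases hv' : v i
      · rw [hv', Bool.and_false] at this; exact Bool.noConfusion this
      · exact hvi hv'
  calc ∑ t : Fin n → Bool, ((S.filter (fun u => (fun i => u i && v i) = t)).card : ℚ) * (-1:ℚ)^(wt t)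
      = ∑ t : Fin n → Bool, (M : ℚ) * (if (∀ i, t i = true → v i = true) then (-1:ℚ)^(wt t) else 0) := by
        apply Finset.sum_congr rfl
        intro t _
        rw [hcard t]
        by_cases hP : ∀ i, t i = true → v i = true <;> simp [hP]
    _ = (M : ℚ) * ∑ t : Fin n → Bool, (if (∀ i, t i = true → v i = true) then (-1:ℚ)^(wt t) else 0) := by
        rw [Finset.mul_sum]
    _ = 0 := by rw [alt_sum_zero v hv0, mul_zero]


lemma wt_xorv {n : ℕ} (x y : Fin n → Bool) : wt (xorv x y) = hammingDist x y := by
  rw [wt, hammingDist]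
  apply congrArg Finset.card
  apply Finset.filter_congr
  intro i _
  cases hx : x i <;> cases hy : y i <;> simp [xorv, hx, hy]

lemma sum_ball {n : ℕ} (S : Finset (Fin n → Bool)) :
    ∑ x ∈ S, (S.filter fun y => hammingDist x y ≤ 1).card
      = S.card + ((S ×ˢ S).filter fun p => wt (xorv p.1 p.2) = 1).card := by
  have hsplit : ∀ x ∈ S, (S.filter fun y => hammingDist x y ≤ 1).card
      = 1 + (S.filter fun y => hammingDist x y = 1).card := by
    intro x hx
    have : S.filter (fun y => hammingDist x y ≤ 1)
        = S.filter (fun y => hammingDist x y = 0) ∪ S.filter (fun y => hammingDist x y = 1) := by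
      rw [← Finset.filter_or]
      apply Finset.filter_congr
      intro y _
      constructor
      · intro h; omega
      · intro h; omega
    rw [this, Finset.card_union_of_disjoint]
    · congr 1
      have : S.filter (fun y => hammingDist x y = 0) = {x} := by
        ext y
        simp only [Finset.mem_filter, Finset.mem_singleton, hammingDist_eq_zero]
        constructor
        · rintro ⟨_, h⟩; exact h.symm
        · rintro rfl; exact ⟨hx, rfl⟩
      rw [this, Finset.card_singleton]
    · rw [Finset.disjoint_filter]
      intro y _ h0 h1
      omega
  rw [Finset.sum_congr rfl hsplit, Finset.sum_add_distrib, Finset.sum_const, smul_eq_mul, mul_one]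
  congr 1
  rw [Finset.card_filter, Finset.sum_product]
  apply Finset.sum_congr rfl
  intro x _
  rw [Finset.card_filter]
  apply Finset.sum_congr rfl
  intro y _
  rw [wt_xorv]



/-- For nonempty `S ⊆ E^n` with `ρ(S) ≤ 1/2`,
`nei(S) + 2(cor(S)+1)(1 - ρ(S)) ≤ n`. -/
theorem stmt0 {n : ℕ} (S : Finset (Fin n → Bool)) (hS : S.Nonempty) (hρ : rho S ≤ 1 / 2) :
    nei S + 2 * ((cor S : ℚ) + 1) * (1 - rho S) ≤ (n : ℚ) := by
  classical
  have hNnat : 0 < S.card := Finset.card_pos.mpr hS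
  have hN : (0:ℚ) < (S.card : ℚ) := by exact_mod_cast hNnat
  have hQ : (0:ℚ) < (2:ℚ)^n := by positivity
  -- facts about cor S
  have hmem : cor S ∈ {k | k ≤ n ∧ CorrImmune S k} :=
    Nat.sSup_mem ⟨0, ⟨Nat.zero_le n, corrImmune_zero S⟩⟩ ⟨n, fun k hk => hk.1⟩
  obtain ⟨hcn, hci⟩ := hmem
  set z0 : Fin n → Bool := fun _ => false with hz0def
  have hz0wt : wt z0 = 0 := by
    rw [wt, Finset.card_eq_zero, Finset.filter_eq_empty_iff]
    intro i _
    simp [z0]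
  have hf0 : fourierT (chi S) z0 = (S.card : ℚ) := by
    rw [fourierT_chi]
    have hc : ∀ u ∈ S, (-1:ℚ)^((univ.filter fun i => u i = true ∧ z0 i = true).card) = 1 := by
      intro u _
      have he : (univ.filter fun i => u i = true ∧ z0 i = true) = ∅ := by
        rw [Finset.filter_eq_empty_iff]
        intro i _
        simp [z0]
      rw [he, Finset.card_empty, pow_zero]
    rw [Finset.sum_congr rfl hc, Finset.sum_const, nsmul_eq_mul, mul_one]
  set P : ℚ := ((((S ×ˢ S).filter fun p => wt (xorv p.1 p.2) = 1).card : ℕ) : ℚ) with hPdef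
  have he1 : ∑ v ∈ univ.erase z0, (fourierT (chi S) v)^2
      = (2:ℚ)^n * (S.card : ℚ) - (S.card : ℚ)^2 := by
    have h := Finset.sum_erase_add univ (fun v => (fourierT (chi S) v)^2) (Finset.mem_univ z0)
    rw [parseval S] at h
    rw [hf0] at h
    nlinarith [h]
  have he2 : ∑ v ∈ univ.erase z0, (fourierT (chi S) v)^2 * ((n:ℚ) - 2 * (wt v : ℚ))
      = (2:ℚ)^n * P - (S.card : ℚ)^2 * (n:ℚ) := by
    have h := Finset.sum_erase_add univ
      (fun v => (fourierT (chi S) v)^2 * ((n:ℚ) - 2 * (wt v : ℚ))) (Finset.mem_univ z0)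
    rw [weighted_parseval S] at h
    rw [hf0, hz0wt, ← hPdef] at h
    push_cast at h ⊢
    nlinarith [h]
  have hterm : ∀ v ∈ univ.erase z0,
      (fourierT (chi S) v)^2 * ((n:ℚ) - 2 * (wt v : ℚ))
      ≤ (fourierT (chi S) v)^2 * ((n:ℚ) - 2 * ((cor S : ℚ) + 1)) := by
    intro v hv
    have hvne : v ≠ z0 := (Finset.mem_erase.mp hv).1
    by_cases hw : wt v ≤ cor S
    · have hz : fourierT (chi S) v = 0 :=
        myFourier_zero S (wt v) (corrImmune_mono S (cor S) hcn hci (wt v) hw) v rfl hvne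
      rw [hz]
      norm_num
    · push_neg at hw
      apply mul_le_mul_of_nonneg_left _ (sq_nonneg (fourierT (chi S) v))
      have hcast : (cor S : ℚ) + 1 ≤ (wt v : ℚ) := by exact_mod_cast hw
      linarith
  have hsumle := Finset.sum_le_sum hterm
  rw [he2, ← Finset.sum_mul, he1] at hsumle
  -- hsumle : 2^n P - N² n ≤ (2^n N - N²)(n - 2(cor+1))
  have hsum' : (∑ x ∈ S, ((S.filter fun y => hammingDist x y ≤ 1).card : ℚ))
      = (S.card : ℚ) + P := by
    rw [← Nat.cast_sum, sum_ball S]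
    push_cast
    rfl
  rw [nei, rho, hsum']
  have heq : ((S.card : ℚ) + P) / (S.card : ℚ) - 1
        + 2 * ((cor S : ℚ) + 1) * (1 - (S.card : ℚ) / (2:ℚ)^n)
      = (P * (2:ℚ)^n + 2 * ((cor S : ℚ) + 1) * ((2:ℚ)^n - (S.card : ℚ)) * (S.card : ℚ))
        / ((S.card : ℚ) * (2:ℚ)^n) := by
    field_simp
    ring
  rw [heq, div_le_iff₀ (by positivity)]
  nlinarith [hsumle]
end

section
/- Let a = χ^S be a perfect 2-coloring of E^n with matrix of parameters ((n−b, b),(c, n−c)). Then the Fourier transform satisfies â(v) = 0 for every v ∈ E^n with wt(v) ∉ {0, (b+c)/2}. -/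
open Finset

def myflip {n : ℕ} (x : Fin n → Bool) (i : Fin n) : Fin n → Bool := Function.update x i (!x i)

lemma myflip_flip {n : ℕ} (x : Fin n → Bool) (i : Fin n) : myflip (myflip x i) i = x := by
  funext j
  by_cases h : j = i
  · subst h; simp [myflip]
  · simp [myflip, Function.update_of_ne h]

lemma myflip_bij {n : ℕ} (i : Fin n) : Function.Bijective (fun x : Fin n → Bool => myflip x i) :=
  Function.Involutive.bijective (fun x => myflip_flip x i)

noncomputable def sgn {n : ℕ} (v u : Fin n → Bool) : ℚ :=
  ∏ i, (if u i = true ∧ v i = true then (-1 : ℚ) else 1)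

lemma pow_card_eq_sgn {n : ℕ} (v u : Fin n → Bool) :
    (-1 : ℚ) ^ ((Finset.univ.filter fun i => u i = true ∧ v i = true).card) = sgn v u := by
  rw [sgn, Finset.prod_ite, Finset.prod_const, Finset.prod_const, one_pow, mul_one]

lemma sgn_flip {n : ℕ} (v x : Fin n → Bool) (i : Fin n) :
    sgn v (myflip x i) = (if v i = true then (-1 : ℚ) else 1) * sgn v x := by
  unfold sgn
  rw [← Finset.mul_prod_erase univ _ (mem_univ i), ← Finset.mul_prod_erase univ
    (fun j => if x j = true ∧ v j = true then (-1 : ℚ) else 1) (mem_univ i), ← mul_assoc]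
  congr 1
  · cases hv : v i <;> cases hx : x i <;> simp [myflip, hv, hx]
  · apply Finset.prod_congr rfl
    intro j hj
    rw [myflip, Function.update_of_ne (Finset.ne_of_mem_erase hj)]

lemma sum_if_sign {n : ℕ} (v : Fin n → Bool) :
    (∑ i : Fin n, if v i = true then (-1 : ℚ) else 1) = (n : ℚ) - 2 * wt v := by
  rw [Finset.sum_ite, Finset.sum_const, Finset.sum_const]
  have h1 : (Finset.univ.filter fun i => v i = true).card = wt v := rfl
  have h2 : (Finset.univ.filter fun i => ¬ v i = true).card = n - wt v := by
    have := Finset.card_filter_add_card_filter_not (s := (univ : Finset (Fin n)))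
      (p := fun i => v i = true)
    simp only [Finset.card_univ, Fintype.card_fin] at this
    omega
  have hle : wt v ≤ n := by
    have := Finset.card_filter_le (univ : Finset (Fin n)) (fun i => v i = true)
    simpa [wt] using this
  rw [h1, h2]
  simp only [nsmul_eq_mul, mul_one, mul_neg_one]
  rw [Nat.cast_sub hle]
  ring

lemma sum_flip_sgn {n : ℕ} (v x : Fin n → Bool) :
    ∑ i : Fin n, sgn v (myflip x i) = ((n : ℚ) - 2 * wt v) * sgn v x := by
  simp only [sgn_flip]
  rw [← Finset.sum_mul, sum_if_sign]

lemma sum_sgn_zero {n : ℕ} (v : Fin n → Bool) (hv : wt v ≠ 0) :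
    ∑ u : Fin n → Bool, sgn v u = 0 := by
  have hne : (Finset.univ.filter fun i => v i = true).Nonempty := by
    rw [← Finset.card_pos]
    have : wt v ≠ 0 := hv
    unfold wt at this; omega
  obtain ⟨j, hj⟩ := hne
  have hjv : v j = true := (Finset.mem_filter.mp hj).2
  have key : ∑ u : Fin n → Bool, sgn v (myflip u j) = ∑ u : Fin n → Bool, sgn v u :=
    Fintype.sum_bijective _ (myflip_bij j) _ _ (fun u => rfl)
  have key2 : ∑ u : Fin n → Bool, sgn v (myflip u j) = - ∑ u : Fin n → Bool, sgn v u := by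
    simp only [sgn_flip, hjv, if_pos, Finset.sum_neg_distrib]
    simp
  rw [key2] at key
  linarith

lemma flip_inj {n : ℕ} (x : Fin n → Bool) : Function.Injective (myflip x) := by
  intro i i' h
  by_contra hne
  have := congrFun h i
  rw [myflip, myflip, Function.update_self, Function.update_of_ne hne] at this
  simp at this

lemma neighbor_eq_image {n : ℕ} (x : Fin n → Bool) :
    (Finset.univ.filter fun y => hammingDist x y = 1) = Finset.univ.image (myflip x) := by
  ext y
  simp only [Finset.mem_filter, Finset.mem_univ, true_and, Finset.mem_image]
  constructor
  · intro hd
    rw [hammingDist] at hd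
    obtain ⟨i, hi⟩ := Finset.card_eq_one.mp hd
    refine ⟨i, ?_⟩
    funext j
    by_cases hji : j = i
    · subst hji
      have : j ∈ ({j} : Finset (Fin n)) := Finset.mem_singleton_self j
      rw [← hi] at this
      have hxy : x j ≠ y j := by simpa using this
      rw [myflip, Function.update_self]
      cases hx : x j <;> cases hy : y j <;> simp_all
    · have : j ∉ ({i} : Finset (Fin n)) := by simpa using hji
      rw [← hi] at this
      have hxy : ¬ x j ≠ y j := by simpa using this
      rw [myflip, Function.update_of_ne hji]
      simpa using (not_not.mp hxy)
  · rintro ⟨i, rfl⟩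
    rw [hammingDist]
    have : ({j : Fin n | x j ≠ myflip x i j} : Finset (Fin n)) = {i} := by
      ext j
      simp only [Finset.mem_filter, Finset.mem_univ, true_and, Finset.mem_singleton]
      by_cases hji : j = i
      · subst hji; simp [myflip]
      · simp [myflip, Function.update_of_ne hji, hji]
    rw [this, Finset.card_singleton]

lemma sum_neighbors {n : ℕ} (x : Fin n → Bool) (f : (Fin n → Bool) → ℚ) :
    ∑ y ∈ Finset.univ.filter (fun y => hammingDist x y = 1), f y
      = ∑ i : Fin n, f (myflip x i) := by
  rw [neighbor_eq_image, Finset.sum_image (fun i _ i' _ h => flip_inj x h)]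

lemma chiCol_eq_one {n : ℕ} (S : Finset (Fin n → Bool)) (y : Fin n → Bool) :
    chiCol S y = 1 ↔ y ∈ S := by
  unfold chiCol; split <;> simp_all

lemma neighbor_sum_chi {n : ℕ} (S : Finset (Fin n → Bool)) (b c : ℕ) (A : Fin 2 → Fin 2 → ℕ)
    (hA : IsPerfectColoring (chiCol S) A) (h01 : A 0 1 = b) (h11 : A 1 1 + c = n)
    (x : Fin n → Bool) :
    ∑ i : Fin n, chi S (myflip x i) = (b : ℚ) + ((n : ℚ) - c - b) * chi S x := by
  have key : ∑ i : Fin n, chi S (myflip x i)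
      = ((Finset.univ.filter fun y => hammingDist x y = 1 ∧ chiCol S y = 1).card : ℚ) := by
    rw [← sum_neighbors]
    unfold chi
    rw [Finset.sum_boole, Finset.filter_filter]
    congr 2
    ext y
    simp [chiCol_eq_one]
  rw [key, hA x 1]
  by_cases hx : x ∈ S
  · have hc : chiCol S x = 1 := (chiCol_eq_one S x).mpr hx
    rw [hc]
    have : (A 1 1 : ℚ) + c = n := by exact_mod_cast congrArg (Nat.cast : ℕ → ℚ) h11
    simp [chi, hx]
    linarith
  · have hc : chiCol S x = 0 := by unfold chiCol; simp [hx]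
    rw [hc]
    simp [chi, hx, h01]

/-- If `χ^S` is a perfect coloring with matrix `((n-b, b), (c, n-c))`
then `â(v) = 0` for every `v` with `wt v ∉ {0, (b+c)/2}`. -/
theorem stmt4 {n : ℕ} (S : Finset (Fin n → Bool)) (b c : ℕ) (A : Fin 2 → Fin 2 → ℕ)
    (hA : IsPerfectColoring (chiCol S) A)
    (h00 : A 0 0 + b = n) (h01 : A 0 1 = b) (h10 : A 1 0 = c) (h11 : A 1 1 + c = n) :
    ∀ v : Fin n → Bool, wt v ≠ 0 → 2 * wt v ≠ b + c → fourierT (chi S) v = 0 := by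
  intro v hv hbc
  have hF : fourierT (chi S) v = ∑ u : Fin n → Bool, chi S u * sgn v u := by
    unfold fourierT
    exact Finset.sum_congr rfl fun u _ => by rw [pow_card_eq_sgn]
  set F := ∑ u : Fin n → Bool, chi S u * sgn v u with hFdef
  have T1 : ∑ x : Fin n → Bool, (∑ i : Fin n, chi S (myflip x i)) * sgn v x
      = ((n : ℚ) - 2 * wt v) * F := by
    calc ∑ x : Fin n → Bool, (∑ i : Fin n, chi S (myflip x i)) * sgn v x
        = ∑ x : Fin n → Bool, ∑ i : Fin n, chi S (myflip x i) * sgn v x := by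
          simp [Finset.sum_mul]
      _ = ∑ i : Fin n, ∑ x : Fin n → Bool, chi S (myflip x i) * sgn v x := Finset.sum_comm
      _ = ∑ i : Fin n, ∑ u : Fin n → Bool, chi S u * sgn v (myflip u i) := by
          refine Finset.sum_congr rfl fun i _ => ?_
          exact (Fintype.sum_bijective (fun u => myflip u i) (myflip_bij i)
            (fun u => chi S u * sgn v (myflip u i))
            (fun x => chi S (myflip x i) * sgn v x)
            (fun u => by simp only [myflip_flip])).symm ▸ rfl
      _ = ∑ u : Fin n → Bool, chi S u * ∑ i : Fin n, sgn v (myflip u i) := by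
          rw [Finset.sum_comm]; simp [Finset.mul_sum]
      _ = ∑ u : Fin n → Bool, chi S u * (((n : ℚ) - 2 * wt v) * sgn v u) := by
          simp [sum_flip_sgn]
      _ = ((n : ℚ) - 2 * wt v) * F := by
          rw [hFdef, Finset.mul_sum]
          exact Finset.sum_congr rfl fun u _ => by ring
  have T2 : ∑ x : Fin n → Bool, (∑ i : Fin n, chi S (myflip x i)) * sgn v x
      = ((n : ℚ) - c - b) * F := by
    calc ∑ x : Fin n → Bool, (∑ i : Fin n, chi S (myflip x i)) * sgn v x
        = ∑ x : Fin n → Bool, ((b : ℚ) + ((n : ℚ) - c - b) * chi S x) * sgn v x := by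
          refine Finset.sum_congr rfl fun x _ => ?_
          rw [neighbor_sum_chi S b c A hA h01 h11 x]
      _ = (b : ℚ) * ∑ x : Fin n → Bool, sgn v x + ((n : ℚ) - c - b) * F := by
          rw [hFdef, Finset.mul_sum, Finset.mul_sum, ← Finset.sum_add_distrib]
          exact Finset.sum_congr rfl fun x _ => by ring
      _ = ((n : ℚ) - c - b) * F := by rw [sum_sgn_zero v hv]; ring
  have hzero : ((b : ℚ) + c - 2 * wt v) * F = 0 := by
    have h := T1.symm.trans T2
    nlinarith [h]
  have hne : ((b : ℚ) + c - 2 * wt v) ≠ 0 := by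
    intro h
    apply hbc
    have : ((2 * wt v : ℕ) : ℚ) = ((b + c : ℕ) : ℚ) := by push_cast; linarith
    exact_mod_cast this
  rw [hF]
  exact (mul_eq_zero.mp hzero).resolve_left hne
end
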